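/- Let m ≥ 1 and k ≥ 1 be integers and let v be the coverage function determined by a finite type Y and A : Fin m → Finset Y. Then the function x ↦ G_k^v(x) (defined by the lottery formula, which is a polynomial in x) is concave on the polytope P_k: ConcaveOn ℝ P_k G_k^v. (The k-bounded-lottery rounding scheme is convex for coverage valuations.) -/

import Mathlib

open Finset

/-- Per-draw weights: project `j` is drawn with probability `x j / k`, and
`none` (no project) with the remaining probability `1 - (∑ j, x j)/k`. -/
noncomputable def lotW {m : ℕ} (k : ℕ) (x : Fin m → ℝ) : Option (Fin m) → ℝ
  | some j => x j / k
  | none => 1 - (∑ j, x j) / k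

/-- Probability of a particular draw function `f : Fin t → Option (Fin m)`,
with per-draw weights determined by `k` and `x`. -/
noncomputable def lotP {m : ℕ} (k t : ℕ) (x : Fin m → ℝ)
    (f : Fin t → Option (Fin m)) : ℝ :=
  ∏ s, lotW k x (f s)

/-- The set of projects chosen by a draw function `f`. -/
def lotProj {m t : ℕ} (f : Fin t → Option (Fin m)) : Finset (Fin m) :=
  Finset.univ.filter (fun j => ∃ s, f s = some j)


/-- Expected value of the set function `v` under the `k`-bounded-lottery
rounding scheme `r_k` applied to `x`. -/
noncomputable def lotG {m : ℕ} (k : ℕ) (v : Finset (Fin m) → ℝ)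
    (x : Fin m → ℝ) : ℝ :=
  ∑ f : Fin k → Option (Fin m), lotP k k x f * v (lotProj f)

lemma lotW_sum {m k : ℕ} (x : Fin m → ℝ) :
    ∑ o : Option (Fin m), lotW k x o = 1 := by
  rw [Fintype.sum_option]
  simp only [lotW, Finset.sum_div]
  ring

/-- Closed form for `lotG` when `v` is a coverage function. -/
lemma lotG_closed {m : ℕ} (k : ℕ) {Y : Type} [Fintype Y] [DecidableEq Y]
    (A : Fin m → Finset Y) (v : Finset (Fin m) → ℝ)
    (hv : ∀ S, v S = ((S.biUnion A).card : ℝ)) (x : Fin m → ℝ) :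
    lotG k v x = ∑ y : Y,
      (1 - (1 - (∑ j ∈ Finset.univ.filter (fun j => y ∈ A j), x j) / k) ^ k) := by
  classical
  have hcard : ∀ f : Fin k → Option (Fin m),
      v (lotProj f) = ∑ y : Y,
        (if ∃ j, (∃ s, f s = some j) ∧ y ∈ A j then (1:ℝ) else 0) := by
    intro f
    rw [hv]
    have h := Finset.sum_ite_mem Finset.univ ((lotProj f).biUnion A) (fun _ => (1:ℝ))
    rw [Finset.univ_inter, Finset.sum_const, nsmul_eq_mul, mul_one] at h
    rw [← h]
    refine Finset.sum_congr rfl fun y _ => ?_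
    refine if_congr ?_ rfl rfl
    simp [lotProj, Finset.mem_biUnion]
  rw [lotG]
  simp only [hcard, Finset.mul_sum]
  rw [Finset.sum_comm]
  refine Finset.sum_congr rfl ?_
  intro y _
  -- avoid set
  set C : Finset (Option (Fin m)) :=
    Finset.univ.filter (fun o => ∀ j, o = some j → y ∉ A j) with hC
  have hCsum : ∑ o ∈ C, lotW k x o
      = 1 - (∑ j ∈ Finset.univ.filter (fun j => y ∈ A j), x j) / k := by
    rw [hC, Finset.sum_filter, Fintype.sum_option]
    simp only [lotW]
    have h1 : (∀ j : Fin m, (none : Option (Fin m)) = some j → y ∉ A j) := by simp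
    rw [if_pos h1]
    have h2 : ∀ j : Fin m,
        (if ∀ j' : Fin m, (some j : Option (Fin m)) = some j' → y ∉ A j'
          then x j / (k:ℝ) else 0)
        = if y ∈ A j then 0 else x j / k := by
      intro j
      by_cases hy : y ∈ A j <;> simp [hy]
    simp only [h2]
    rw [Finset.sum_ite, Finset.sum_const, smul_zero, zero_add, ← Finset.sum_div]
    have hsplit := Finset.sum_filter_add_sum_filter_not Finset.univ
      (fun j => y ∈ A j) x
    have h3 : (∑ j ∈ Finset.univ.filter (fun j => y ∈ A j), x j) / (k:ℝ)
        + (∑ j ∈ Finset.univ.filter (fun j => ¬ y ∈ A j), x j) / (k:ℝ)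
        = (∑ j : Fin m, x j) / (k:ℝ) := by
      rw [← add_div, hsplit]
    linarith
  have hall : ∑ f : Fin k → Option (Fin m), lotP k k x f = 1 := by
    rw [show (Finset.univ : Finset (Fin k → Option (Fin m)))
        = Fintype.piFinset (fun _ => Finset.univ) by simp]
    simp only [lotP]
    rw [← Finset.prod_univ_sum (fun _ => (Finset.univ : Finset (Option (Fin m))))
      (fun _ o => lotW k x o)]
    rw [lotW_sum x, Finset.prod_const_one]
  have havoid : ∑ f ∈ Finset.univ.filter
        (fun f : Fin k → Option (Fin m) => ¬ ∃ j, (∃ s, f s = some j) ∧ y ∈ A j),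
        lotP k k x f
      = (1 - (∑ j ∈ Finset.univ.filter (fun j => y ∈ A j), x j) / k) ^ k := by
    have hset : Finset.univ.filter
        (fun f : Fin k → Option (Fin m) => ¬ ∃ j, (∃ s, f s = some j) ∧ y ∈ A j)
        = Fintype.piFinset (fun _ => C) := by
      ext f
      simp only [Finset.mem_filter, Finset.mem_univ, true_and,
        Fintype.mem_piFinset, hC, not_exists]
      aesop
    rw [hset]
    simp only [lotP]
    rw [← Finset.prod_univ_sum (fun _ => C) (fun _ o => lotW k x o), hCsum]
    rw [Finset.prod_const, Finset.card_univ, Fintype.card_fin]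
  calc ∑ f : Fin k → Option (Fin m),
        lotP k k x f * (if ∃ j, (∃ s, f s = some j) ∧ y ∈ A j then (1:ℝ) else 0)
      = ∑ f : Fin k → Option (Fin m),
        (lotP k k x f - (if ¬ ∃ j, (∃ s, f s = some j) ∧ y ∈ A j then lotP k k x f else 0)) := by
        refine Finset.sum_congr rfl fun f _ => ?_
        by_cases hf : ∃ j, (∃ s, f s = some j) ∧ y ∈ A j <;> simp [hf]
    _ = 1 - (1 - (∑ j ∈ Finset.univ.filter (fun j => y ∈ A j), x j) / k) ^ k := by
        rw [Finset.sum_sub_distrib, hall, ← Finset.sum_filter, havoid]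

theorem stmt6 (m k : ℕ) (hm : 1 ≤ m) (hk : 1 ≤ k)
    (Y : Type) [Fintype Y] [DecidableEq Y] (A : Fin m → Finset Y)
    (v : Finset (Fin m) → ℝ)
    (hv : ∀ S : Finset (Fin m), v S = ((S.biUnion A).card : ℝ)) :
    ConcaveOn ℝ
      {x : Fin m → ℝ | (∀ j, 0 ≤ x j ∧ x j ≤ 1) ∧ ∑ j, x j ≤ (k : ℝ)}
      (lotG k v) := by
  classical
  have hkpos : (0:ℝ) < k := by exact_mod_cast hk
  set P : Set (Fin m → ℝ) :=
    {x : Fin m → ℝ | (∀ j, 0 ≤ x j ∧ x j ≤ 1) ∧ ∑ j, x j ≤ (k : ℝ)} with hPdef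
  have hPconv : Convex ℝ P := by
    intro x hx z hz a b ha hb hab
    obtain ⟨hx1, hx2⟩ := hx
    obtain ⟨hz1, hz2⟩ := hz
    constructor
    · intro j
      simp only [Pi.add_apply, Pi.smul_apply, smul_eq_mul]
      constructor
      · have := (hx1 j).1; have := (hz1 j).1; nlinarith
      · have := (hx1 j).2; have := (hz1 j).2; nlinarith
    · simp only [Pi.add_apply, Pi.smul_apply, smul_eq_mul]
      rw [Finset.sum_add_distrib, ← Finset.mul_sum, ← Finset.mul_sum]
      nlinarith
  have hfun : lotG k v = fun x : Fin m → ℝ => ∑ y : Y,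
      (1 - (1 - (∑ j ∈ Finset.univ.filter (fun j => y ∈ A j), x j) / k) ^ k) :=
    funext (lotG_closed k A v hv)
  rw [hfun]
  -- key bound on the "load" of y
  have hload : ∀ (y : Y) (x : Fin m → ℝ), x ∈ P →
      (0:ℝ) ≤ 1 - (∑ j ∈ Finset.univ.filter (fun j => y ∈ A j), x j) / k := by
    intro y x hx
    obtain ⟨hx1, hx2⟩ := hx
    have hsub : ∑ j ∈ Finset.univ.filter (fun j => y ∈ A j), x j ≤ ∑ j : Fin m, x j :=
      Finset.sum_le_sum_of_subset_of_nonneg (Finset.filter_subset _ _)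
        (fun j _ _ => (hx1 j).1)
    have : ∑ j ∈ Finset.univ.filter (fun j => y ∈ A j), x j ≤ (k:ℝ) := le_trans hsub hx2
    have := div_le_one_of_le₀ this (le_of_lt hkpos)
    linarith
  -- each summand is concave; conclude by induction over the finite sum
  have hconc : ∀ y : Y, ConcaveOn ℝ P
      (fun x => 1 - (1 - (∑ j ∈ Finset.univ.filter (fun j => y ∈ A j), x j) / k) ^ k) := by
    intro y
    refine ⟨hPconv, ?_⟩
    intro x hx z hz a b ha hb hab
    simp only [smul_eq_mul]
    set Sx := ∑ j ∈ Finset.univ.filter (fun j => y ∈ A j), x j with hSx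
    set Sz := ∑ j ∈ Finset.univ.filter (fun j => y ∈ A j), z j with hSz
    have hlin : ∑ j ∈ Finset.univ.filter (fun j => y ∈ A j),
        (a • x + b • z) j = a * Sx + b * Sz := by
      simp only [Pi.add_apply, Pi.smul_apply, smul_eq_mul]
      rw [Finset.sum_add_distrib, ← Finset.mul_sum, ← Finset.mul_sum]
    rw [hlin]
    have hu : (0:ℝ) ≤ 1 - Sx / k := hload y x hx
    have hv' : (0:ℝ) ≤ 1 - Sz / k := hload y z hz
    have hkey := (convexOn_pow (𝕜 := ℝ) k).2 (Set.mem_Ici.2 hu) (Set.mem_Ici.2 hv')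
      ha hb hab
    simp only [smul_eq_mul] at hkey
    have heq : 1 - (a * Sx + b * Sz) / k = a * (1 - Sx / k) + b * (1 - Sz / k) := by
      field_simp
      ring_nf
      nlinarith [hab]
    rw [heq]
    nlinarith [hkey]
  -- sum of concave functions
  have : ∀ (T : Finset Y), ConcaveOn ℝ P
      (fun x => ∑ y ∈ T,
        (1 - (1 - (∑ j ∈ Finset.univ.filter (fun j => y ∈ A j), x j) / k) ^ k)) := by
    intro T
    induction T using Finset.induction_on with
    | empty => simpa using concaveOn_const 0 hPconv
    | insert _ _ hnot ih =>
      simp only [Finset.sum_insert hnot]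
      exact (hconc _).add ih
  exact this Finset.univ
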